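/- Let n = 2k−1 with k ≥ 2 and σ ∈ S_{n+1} with t = σ^{-1}(n+1). Define f_σ on subsets of [n] by f_σ(X) = σ(X) if t ∉ X, and f_σ(X) = ([n] \ σ(X \ {t})) if t ∈ X (where σ(X) means the image {σ(x) : x ∈ X}, which lies in [n] in both cases). Then f_σ is an automorphism of the graph H(2k−1, k). -/

import Mathlib

open Finset symmDiff

/-- The graph `H(n,k)` on subsets of `[n]`: `X ~ Y` iff `|X ∆ Y| = k`. -/
def HGraph (n k : ℕ) : SimpleGraph (Finset (Fin n)) where
  Adj X Y := (X ∆ Y).card = k ∧ X ≠ Y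
  symm := by
    constructor
    intro X Y h
    exact ⟨by rw [symmDiff_comm]; exact h.1, h.2.symm⟩
  loopless := ⟨fun X h => h.2 rfl⟩

/-- For `σ ∈ S_{n+1}` with `t = σ⁻¹(n+1)`: `f_σ(X) = σ(X)` if `t ∉ X`, and
`f_σ(X) = [n] \ σ(X \ {t})` if `t ∈ X`.  (Subsets of `[n]` are `Finset (Fin n)`; the
set `[n+1]` is modelled by `Fin (n+1)` with `n+1` corresponding to `Fin.last n`, and
`t ∈ X` is equivalent to `Fin.last n ∈ σ(X)`.) -/
def fperm (n : ℕ) (σ : Equiv.Perm (Fin (n + 1))) (X : Finset (Fin n)) : Finset (Fin n) :=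
  let Y := X.image (fun i => σ (Fin.castSucc i))
  if Fin.last n ∈ Y then Finset.univ.filter (fun i => Fin.castSucc i ∉ Y)
  else Finset.univ.filter (fun i => Fin.castSucc i ∈ Y)

private def Jmap (n : ℕ) (σ : Equiv.Perm (Fin (n + 1))) (X : Finset (Fin n)) :
    Finset (Fin (n + 1)) :=
  X.image (fun i => σ (Fin.castSucc i))

private lemma Jinj (n : ℕ) (σ : Equiv.Perm (Fin (n + 1))) :
    Function.Injective (fun i : Fin n => σ (Fin.castSucc i)) :=
  fun _ _ hab => Fin.castSucc_injective n (σ.injective hab)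

private lemma Jmap_inj (n : ℕ) (σ : Equiv.Perm (Fin (n + 1))) :
    Function.Injective (Jmap n σ) :=
  Finset.image_injective (Jinj n σ)

private lemma sigma_last_not_mem (n : ℕ) (σ : Equiv.Perm (Fin (n + 1))) (X : Finset (Fin n)) :
    σ (Fin.last n) ∉ Jmap n σ X := by
  simp only [Jmap, Finset.mem_image, not_exists]
  rintro i ⟨_, hi⟩
  exact (Fin.castSucc_lt_last i).ne (σ.injective hi)

private lemma fperm_image (n : ℕ) (σ : Equiv.Perm (Fin (n + 1))) (X : Finset (Fin n)) :
    (fperm n σ X).image Fin.castSucc =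
      if Fin.last n ∈ Jmap n σ X then (Jmap n σ X)ᶜ else Jmap n σ X := by
  have hf : fperm n σ X =
      if Fin.last n ∈ Jmap n σ X then
        Finset.univ.filter (fun i => Fin.castSucc i ∉ Jmap n σ X)
      else Finset.univ.filter (fun i => Fin.castSucc i ∈ Jmap n σ X) := rfl
  rw [hf]
  split_ifs with h
  · ext j
    simp only [Finset.mem_image, Finset.mem_filter, Finset.mem_univ, true_and,
      Finset.mem_compl]
    refine Fin.lastCases ?_ (fun i => ?_) j
    · constructor
      · rintro ⟨i, _, hi⟩; exact absurd hi (Fin.castSucc_lt_last i).ne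
      · intro h'; exact absurd h h'
    · constructor
      · rintro ⟨i', hi', h'⟩
        rwa [Fin.castSucc_injective n h'] at hi'
      · intro h'; exact ⟨i, h', rfl⟩
  · ext j
    simp only [Finset.mem_image, Finset.mem_filter, Finset.mem_univ, true_and]
    refine Fin.lastCases ?_ (fun i => ?_) j
    · constructor
      · rintro ⟨i, _, hi⟩; exact absurd hi (Fin.castSucc_lt_last i).ne
      · intro h'; exact absurd h' h
    · constructor
      · rintro ⟨i', hi', h'⟩
        rwa [Fin.castSucc_injective n h'] at hi'
      · intro h'; exact ⟨i, h', rfl⟩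

private lemma compl_symmDiff_fin {α : Type*} [Fintype α] [DecidableEq α] (s t : Finset α) :
    sᶜ ∆ t = (s ∆ t)ᶜ := by
  ext x
  simp only [Finset.mem_symmDiff, Finset.mem_compl, Finset.mem_symmDiff]
  tauto

private lemma compl_symmDiff_compl_fin {α : Type*} [Fintype α] [DecidableEq α] (s t : Finset α) :
    sᶜ ∆ tᶜ = s ∆ t := by
  ext x
  simp only [Finset.mem_symmDiff, Finset.mem_compl]
  tauto

private lemma fperm_injective (n : ℕ) (σ : Equiv.Perm (Fin (n + 1))) :
    Function.Injective (fperm n σ) := by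
  intro X X' h
  have h2 := congrArg (Finset.image Fin.castSucc) h
  rw [fperm_image, fperm_image] at h2
  split_ifs at h2 with h1 h3 h3
  · exact Jmap_inj n σ (compl_injective h2)
  · exfalso
    have : σ (Fin.last n) ∈ (Jmap n σ X)ᶜ :=
      Finset.mem_compl.mpr (sigma_last_not_mem n σ X)
    rw [h2] at this
    exact sigma_last_not_mem n σ X' this
  · exfalso
    have : σ (Fin.last n) ∈ (Jmap n σ X')ᶜ :=
      Finset.mem_compl.mpr (sigma_last_not_mem n σ X')
    rw [← h2] at this
    exact sigma_last_not_mem n σ X this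
  · exact Jmap_inj n σ h2

private lemma card_symmDiff_image_castSucc (n : ℕ) (s t : Finset (Fin n)) :
    ((s.image Fin.castSucc) ∆ (t.image Fin.castSucc)).card = (s ∆ t).card := by
  rw [← Finset.image_symmDiff _ _ (Fin.castSucc_injective n),
    Finset.card_image_of_injective _ (Fin.castSucc_injective n)]

/-- For `n = 2k - 1`, `k ≥ 2`, the map `f_σ` is an automorphism of `H(2k-1, k)`. -/
theorem stmt_3 (k n : ℕ) (hk : 2 ≤ k) (hn : n = 2 * k - 1) (σ : Equiv.Perm (Fin (n + 1))) :
    Function.Bijective (fperm n σ) ∧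
    (∀ X Y : Finset (Fin n),
      (HGraph n k).Adj X Y ↔ (HGraph n k).Adj (fperm n σ X) (fperm n σ Y)) := by
  have hinj := fperm_injective n σ
  have hbij : Function.Bijective (fperm n σ) :=
    Finite.injective_iff_bijective.mp hinj
  have hn1 : n + 1 = 2 * k := by omega
  refine ⟨hbij, fun X Y => ?_⟩
  have hXY : (X ∆ Y).card = ((Jmap n σ X) ∆ (Jmap n σ Y)).card := by
    rw [Jmap, Jmap, ← Finset.image_symmDiff _ _ (Jinj n σ),
      Finset.card_image_of_injective _ (Jinj n σ)]
  have hfXY : ((fperm n σ X) ∆ (fperm n σ Y)).card =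
      (((fperm n σ X).image Fin.castSucc) ∆ ((fperm n σ Y).image Fin.castSucc)).card := by
    rw [card_symmDiff_image_castSucc]
  have hbound : ((Jmap n σ X) ∆ (Jmap n σ Y)).card ≤ n + 1 := by
    exact le_trans (Finset.card_le_univ _) (by simp)
  have key : ((fperm n σ X) ∆ (fperm n σ Y)).card = k ↔ (X ∆ Y).card = k := by
    rw [hfXY, fperm_image, fperm_image, hXY]
    split_ifs with h1 h2 h2
    · rw [compl_symmDiff_compl_fin]
    · rw [compl_symmDiff_fin, Finset.card_compl]
      simp only [Fintype.card_fin]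
      omega
    · rw [symmDiff_comm, compl_symmDiff_fin, Finset.card_compl, symmDiff_comm]
      simp only [Fintype.card_fin]
      omega
    · rfl
  constructor
  · rintro ⟨hc, hne⟩
    exact ⟨key.mpr hc, fun he => hne (hinj he)⟩
  · rintro ⟨hc, hne⟩
    exact ⟨key.mp hc, fun he => hne (congrArg _ he)⟩
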